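/- arXiv:2301.09217 — 5 statements merged into one kernel-verified Lean document; each statement's English description precedes it below -/
import Mathlib

section
/- Approximate complementary slackness (Lemma 2.3 of Duan–Pettie, bipartite case): Let G = (U ∪ V, E) be a finite weighted bipartite graph with nonnegative edge weights w, let M ⊆ E be a matching, let ε₀, ε₁ ≥ 0, and let y assign a nonnegative real to every vertex. Suppose (i) for all uv ∈ E, y_u + y_v ≥ (1−ε₀)·w(uv); (ii) for all uv ∈ M, y_u + y_v ≤ (1+ε₁)·w(uv); and (iii) y_z = 0 for every vertex z unmatched by M. Then for every matching M' ⊆ E, w(M) ≥ (1+ε₁)^{-1}·(1−ε₀)·w(M'); in particular M is a (1+ε₁)^{-1}(1−ε₀)-approximate maximum weight matching. -/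
/-- `M` is a matching: no two distinct edges share an endpoint. -/
def IsMatching {U V : Type*} (M : Finset (U × V)) : Prop :=
  ∀ e ∈ M, ∀ e' ∈ M, e ≠ e' → e.1 ≠ e'.1 ∧ e.2 ≠ e'.2

/-- **Approximate complementary slackness** (Lemma 2.3 of Duan–Pettie, bipartite case).
If the nonnegative duals `y` satisfy `y_u + y_v ≥ (1-ε₀)·w(uv)` for all edges,
`y_u + y_v ≤ (1+ε₁)·w(uv)` for all matched edges, and `y` vanishes on vertices
unmatched by `M`, then `M` is a `(1+ε₁)⁻¹(1-ε₀)`-approximate maximum weight matching. -/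
theorem approximate_complementary_slackness
    {U V : Type*} [Fintype U] [Fintype V] [DecidableEq U] [DecidableEq V]
    (E : Finset (U × V)) (w : U × V → ℝ)
    (hw : ∀ e ∈ E, 0 ≤ w e)
    (M : Finset (U × V)) (hME : M ⊆ E) (hM : IsMatching M)
    (ε₀ ε₁ : ℝ) (hε₀ : 0 ≤ ε₀) (hε₁ : 0 ≤ ε₁)
    (yu : U → ℝ) (yv : V → ℝ)
    (hyu : ∀ u : U, 0 ≤ yu u) (hyv : ∀ v : V, 0 ≤ yv v)
    (hfeas : ∀ e ∈ E, (1 - ε₀) * w e ≤ yu e.1 + yv e.2)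
    (htight : ∀ e ∈ M, yu e.1 + yv e.2 ≤ (1 + ε₁) * w e)
    (hyu0 : ∀ u : U, (∀ e ∈ M, e.1 ≠ u) → yu u = 0)
    (hyv0 : ∀ v : V, (∀ e ∈ M, e.2 ≠ v) → yv v = 0) :
    ∀ M' : Finset (U × V), M' ⊆ E → IsMatching M' →
      (1 + ε₁)⁻¹ * (1 - ε₀) * ∑ e ∈ M', w e ≤ ∑ e ∈ M, w e := by
  intro M' hM'E hM'
  have hpos : (0:ℝ) < 1 + ε₁ := by linarith
  -- generic lemma inline via have
  have key : ∀ (N : Finset (U × V)), IsMatching N →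
      (∑ e ∈ N, yu e.1) + (∑ e ∈ N, yv e.2) ≤ (∑ u, yu u) + (∑ v, yv v) := by
    intro N hN
    have h1 : ∑ e ∈ N, yu e.1 = ∑ u ∈ N.image Prod.fst, yu u := by
      refine (Finset.sum_image ?_).symm
      intro a ha b hb hab
      by_contra hne
      exact (hN a ha b hb hne).1 hab
    have h2 : ∑ e ∈ N, yv e.2 = ∑ v ∈ N.image Prod.snd, yv v := by
      refine (Finset.sum_image ?_).symm
      intro a ha b hb hab
      by_contra hne
      exact (hN a ha b hb hne).2 hab
    rw [h1, h2]
    exact add_le_add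
      (Finset.sum_le_sum_of_subset_of_nonneg (Finset.subset_univ _) (fun u _ _ => hyu u))
      (Finset.sum_le_sum_of_subset_of_nonneg (Finset.subset_univ _) (fun v _ _ => hyv v))
  have hMfull : (∑ u, yu u) + (∑ v, yv v) = ∑ e ∈ M, (yu e.1 + yv e.2) := by
    have h1 : ∑ u, yu u = ∑ e ∈ M, yu e.1 := by
      have h0 : (∑ u ∈ M.image Prod.fst, yu u) = ∑ e ∈ M, yu e.1 :=
        Finset.sum_image (fun a ha b hb hab => by
          by_contra hne; exact (hM a ha b hb hne).1 hab)
      rw [← h0]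
      refine (Finset.sum_subset (Finset.subset_univ _) ?_).symm
      intro u _ hu
      exact hyu0 u (fun e he heq => hu (Finset.mem_image.mpr ⟨e, he, heq⟩))
    have h2 : ∑ v, yv v = ∑ e ∈ M, yv e.2 := by
      have h0 : (∑ v ∈ M.image Prod.snd, yv v) = ∑ e ∈ M, yv e.2 :=
        Finset.sum_image (fun a ha b hb hab => by
          by_contra hne; exact (hM a ha b hb hne).2 hab)
      rw [← h0]
      refine (Finset.sum_subset (Finset.subset_univ _) ?_).symm
      intro v _ hv
      exact hyv0 v (fun e he heq => hv (Finset.mem_image.mpr ⟨e, he, heq⟩))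
    rw [h1, h2, Finset.sum_add_distrib]
  have step1 : (1 - ε₀) * ∑ e ∈ M', w e ≤ ∑ e ∈ M', (yu e.1 + yv e.2) := by
    rw [Finset.mul_sum]
    exact Finset.sum_le_sum (fun e he => hfeas e (hM'E he))
  have step2 : ∑ e ∈ M', (yu e.1 + yv e.2) ≤ ∑ e ∈ M, (yu e.1 + yv e.2) := by
    rw [Finset.sum_add_distrib]
    calc _ ≤ (∑ u, yu u) + (∑ v, yv v) := key M' hM'
      _ = _ := hMfull
  have step3 : ∑ e ∈ M, (yu e.1 + yv e.2) ≤ (1 + ε₁) * ∑ e ∈ M, w e := by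
    rw [Finset.mul_sum]
    exact Finset.sum_le_sum htight
  rw [mul_assoc, inv_mul_le_iff₀ hpos]
  linarith
end

section
/- ε-stability implies approximate optimality: Let G = (U ∪ V, E) be a finite weighted bipartite graph with positive edge weights w, let 0 ≤ ε ≤ 1/2, let M ⊆ E be a matching, and let y assign a nonnegative real y_u to each u ∈ U. Suppose (i) y_u = 0 for every u ∈ U unmatched by M; (ii) for every matched edge uv ∈ M, w(uv) − y_u ≥ 0 and w(uv) − y_u ≥ (1−2ε)·(w(u'v) − y_{u'}) for every neighbor u' ∈ N(v); and (iii) for every v ∈ V unmatched by M and every neighbor u ∈ N(v), w(uv) − y_u ≤ ε·w(uv). Then for every matching M' ⊆ E, w(M) ≥ (1−2ε)·w(M'); in particular M is a (1−2ε)-approximate maximum weight matching. -/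
/-- **ε-stability implies approximate optimality.**
Suppose the prices `y` on `U` vanish on unmatched vertices, every matched edge `uv ∈ M`
has nonnegative utility `w(uv) - y u` dominating `(1-2ε)` times the utility of each
competing edge `u'v ∈ E`, and every unmatched `v ∈ V` only sees edges of utility at most
`ε·w(uv)`. Then `M` is a `(1-2ε)`-approximate maximum weight matching. -/
theorem eps_stable_implies_approx_optimal
    {U V : Type*} [Fintype U] [Fintype V] [DecidableEq U] [DecidableEq V]
    (E : Finset (U × V)) (w : U × V → ℝ)
    (hw : ∀ e ∈ E, 0 < w e)
    (ε : ℝ) (hε0 : 0 ≤ ε) (hε : ε ≤ 1 / 2)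
    (M : Finset (U × V)) (hME : M ⊆ E) (hM : IsMatching M)
    (y : U → ℝ) (hy : ∀ u : U, 0 ≤ y u)
    (hy0 : ∀ u : U, (∀ e ∈ M, e.1 ≠ u) → y u = 0)
    (hmatched : ∀ e ∈ M, 0 ≤ w e - y e.1 ∧
      ∀ u' : U, (u', e.2) ∈ E → (1 - 2 * ε) * (w (u', e.2) - y u') ≤ w e - y e.1)
    (hunmatched : ∀ v : V, (∀ e ∈ M, e.2 ≠ v) →
      ∀ u : U, (u, v) ∈ E → w (u, v) - y u ≤ ε * w (u, v)) :
    ∀ M' : Finset (U × V), M' ⊆ E → IsMatching M' →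
      (1 - 2 * ε) * ∑ e ∈ M', w e ≤ ∑ e ∈ M, w e := by
  intro M' hM'E hM'
  have hε2 : 0 ≤ 1 - 2 * ε := by linarith
  -- dual variable on V: utility of the matched edge at v (0 if unmatched)
  set z : V → ℝ := fun v => ∑ e ∈ M.filter (fun e => e.2 = v), (w e - y e.1) with hz
  have hznn : ∀ v, 0 ≤ z v := by
    intro v
    apply Finset.sum_nonneg
    intro e he
    exact (hmatched e (Finset.mem_filter.mp he).1).1
  -- pointwise dual feasibility
  have key : ∀ e ∈ M', (1 - 2 * ε) * w e ≤ y e.1 + z e.2 := by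
    intro e heM'
    obtain ⟨u, v⟩ := e
    have heE : (u, v) ∈ E := hM'E heM'
    by_cases hmv : ∃ f ∈ M, f.2 = v
    · obtain ⟨f, hfM, hfv⟩ := hmv
      have hfil : M.filter (fun e => e.2 = v) = {f} := by
        apply Finset.eq_singleton_iff_unique_mem.mpr
        refine ⟨Finset.mem_filter.mpr ⟨hfM, hfv⟩, ?_⟩
        intro g hg
        obtain ⟨hgM, hgv⟩ := Finset.mem_filter.mp hg
        by_contra hne
        exact (hM g hgM f hfM hne).2 (hgv.trans hfv.symm)
      have hzv : z v = w f - y f.1 := by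
        simp [hz, hfil]
      have h2 := (hmatched f hfM).2 u (by rw [hfv]; exact heE)
      rw [hfv] at h2
      have hyu : (1 - 2 * ε) * y u ≤ y u :=
        le_of_sub_nonneg (by nlinarith [hy u])
      simp only [hzv]
      nlinarith
    · push_neg at hmv
      have hzv : z v = 0 := by
        have : M.filter (fun e => e.2 = v) = ∅ := by
          apply Finset.filter_eq_empty_iff.mpr
          intro g hg
          exact hmv g hg
        simp [hz, this]
      have h3 := hunmatched v hmv u heE
      have hwpos := hw _ heE
      simp only [hzv, add_zero]
      nlinarith
  calc (1 - 2 * ε) * ∑ e ∈ M', w e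
      = ∑ e ∈ M', (1 - 2 * ε) * w e := Finset.mul_sum _ _ _
    _ ≤ ∑ e ∈ M', (y e.1 + z e.2) := Finset.sum_le_sum key
    _ = ∑ e ∈ M', y e.1 + ∑ e ∈ M', z e.2 := Finset.sum_add_distrib
    _ ≤ ∑ u : U, y u + ∑ v : V, z v := by
        gcongr
        · calc ∑ e ∈ M', y e.1
              = ∑ u ∈ M'.image Prod.fst, y u := by
                rw [Finset.sum_image]
                intro a ha b hb hab
                by_contra hne
                exact (hM' a ha b hb hne).1 hab
            _ ≤ ∑ u : U, y u := by
                apply Finset.sum_le_sum_of_subset_of_nonneg (Finset.subset_univ _)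
                intro u _ _
                exact hy u
        · calc ∑ e ∈ M', z e.2
              = ∑ v ∈ M'.image Prod.snd, z v := by
                rw [Finset.sum_image]
                intro a ha b hb hab
                by_contra hne
                exact (hM' a ha b hb hne).2 hab
            _ ≤ ∑ v : V, z v := by
                apply Finset.sum_le_sum_of_subset_of_nonneg (Finset.subset_univ _)
                intro v _ _
                exact hznn v
    _ = ∑ e ∈ M, y e.1 + ∑ e ∈ M, (w e - y e.1) := by
        congr 1
        · rw [show ∑ e ∈ M, y e.1 = ∑ u ∈ M.image Prod.fst, y u from by
            rw [Finset.sum_image]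
            intro a ha b hb hab
            by_contra hne
            exact (hM a ha b hb hne).1 hab]
          symm
          apply Finset.sum_subset (Finset.subset_univ _)
          intro u _ hu
          apply hy0
          intro e he
          intro h
          exact hu (Finset.mem_image.mpr ⟨e, he, h⟩)
        · rw [hz]
          exact Finset.sum_fiberwise M Prod.snd (fun e => w e - y e.1)
    _ = ∑ e ∈ M, w e := by
        rw [← Finset.sum_add_distrib]
        simp
end

section
/- Existence of an ε-stable matching–price pair (correctness content of the multiplicative auction algorithm): Let G = (U ∪ V, E) be a finite weighted bipartite graph with positive edge weights w and let 0 < ε ≤ 1/2. Then there exist a matching M ⊆ E and nonnegative prices y_u for u ∈ U such that (i) y_u = 0 for every u ∈ U unmatched by M; (ii) for every matched edge uv ∈ M, w(uv) − y_u > 0 and w(uv) − y_u ≥ (1−2ε)·(w(u'v) − y_{u'}) for every neighbor u' ∈ N(v); and (iii) for every v ∈ V unmatched by M and every neighbor u ∈ N(v), w(uv) − y_u ≤ ε·w(uv). Consequently, for every weighted bipartite graph and every 0 < ε' < 1 there exists a matching M with w(M) ≥ (1−ε')·w(M*), where M* is a maximum weight matching. -/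
/-- Auxiliary: existence of an ε-stable matching–price pair, proved by an
auction-style argument (iterated price raising, terminating because the total
price increases by a fixed amount at every step and is bounded above). -/
theorem auction_aux
    {U V : Type*} [Fintype U] [Fintype V] [DecidableEq U] [DecidableEq V]
    (E : Finset (U × V)) (w : U × V → ℝ)
    (hw : ∀ e ∈ E, 0 < w e)
    (ε : ℝ) (hε0 : 0 < ε) (hε : ε ≤ 1 / 2) :
    ∃ (M : Finset (U × V)) (y : U → ℝ),
      M ⊆ E ∧ IsMatching M ∧ (∀ u : U, 0 ≤ y u) ∧
      (∀ u : U, (∀ e ∈ M, e.1 ≠ u) → y u = 0) ∧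
      (∀ e ∈ M, 0 < w e - y e.1 ∧
        ∀ u' : U, (u', e.2) ∈ E → (1 - 2 * ε) * (w (u', e.2) - y u') ≤ w e - y e.1) ∧
      (∀ v : V, (∀ e ∈ M, e.2 ≠ v) →
        ∀ u : U, (u, v) ∈ E → w (u, v) - y u ≤ ε * w (u, v)) := by
  classical
  rcases E.eq_empty_or_nonempty with rfl | hne
  · refine ⟨∅, fun _ => 0, ?_, ?_, ?_, ?_, ?_, ?_⟩ <;>
      simp [IsMatching]
  -- Global quantities
  set W := E.sup' hne w with hW
  set wmin := E.inf' hne w with hwmin_def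
  have hwmin : 0 < wmin := (Finset.lt_inf'_iff hne).2 hw
  set δ := ε * (ε * wmin) with hδ_def
  have hδ : 0 < δ := by positivity
  have hW0 : 0 < W := by
    obtain ⟨e, he⟩ := hne
    exact lt_of_lt_of_le (hw e he) (Finset.le_sup' w he)
  set B := (Fintype.card U : ℝ) * W + δ with hB
  have h2ε : (0:ℝ) ≤ 1 - 2 * ε := by linarith
  have hε1 : ε < 1 := by linarith
  -- Main induction: from any state satisfying the invariants, with at most `n`
  -- price-raising steps of "budget" left, we reach a stable state.
  have key : ∀ n : ℕ, ∀ M : Finset (U × V), ∀ y : U → ℝ,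
      M ⊆ E → IsMatching M → (∀ u, 0 ≤ y u) →
      (∀ u, (∀ e ∈ M, e.1 ≠ u) → y u = 0) →
      (∀ e ∈ M, 0 < w e - y e.1 ∧ ∀ u' : U, (u', e.2) ∈ E →
        (1 - 2 * ε) * (w (u', e.2) - y u') ≤ w e - y e.1) →
      (∀ u, y u ≤ W) →
      B - ∑ u, y u ≤ n * δ →
      ∃ (M : Finset (U × V)) (y : U → ℝ),
        M ⊆ E ∧ IsMatching M ∧ (∀ u : U, 0 ≤ y u) ∧
        (∀ u : U, (∀ e ∈ M, e.1 ≠ u) → y u = 0) ∧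
        (∀ e ∈ M, 0 < w e - y e.1 ∧
          ∀ u' : U, (u', e.2) ∈ E → (1 - 2 * ε) * (w (u', e.2) - y u') ≤ w e - y e.1) ∧
        (∀ v : V, (∀ e ∈ M, e.2 ≠ v) →
          ∀ u : U, (u, v) ∈ E → w (u, v) - y u ≤ ε * w (u, v)) := by
    intro n
    induction n with
    | zero =>
      intro M y _ _ _ _ _ hyW hsum
      exfalso
      have h1 : ∑ u, y u ≤ (Fintype.card U : ℝ) * W := by
        calc ∑ u, y u ≤ ∑ _u : U, W := Finset.sum_le_sum (fun u _ => hyW u)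
          _ = (Fintype.card U : ℝ) * W := by
              rw [Finset.sum_const, Finset.card_univ, nsmul_eq_mul]
      simp only [Nat.cast_zero, zero_mul] at hsum
      linarith
    | succ n ih =>
      intro M y hME hmatch hy0 hyun hstab hyW hsum
      by_cases hdone : ∀ v : V, (∀ e ∈ M, e.2 ≠ v) →
          ∀ u : U, (u, v) ∈ E → w (u, v) - y u ≤ ε * w (u, v)
      · exact ⟨M, y, hME, hmatch, hy0, hyun, hstab, hdone⟩
      · push_neg at hdone
        obtain ⟨v, hv, u₀, hu₀E, hu₀⟩ := hdone
        -- hu₀ : ε * w (u₀, v) < w (u₀, v) - y u₀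
        set s : Finset U := (E.filter (fun e => e.2 = v)).image Prod.fst with hs
        have hu₀s : u₀ ∈ s :=
          Finset.mem_image.2 ⟨(u₀, v), Finset.mem_filter.2 ⟨hu₀E, rfl⟩, rfl⟩
        obtain ⟨u, hus, hmax⟩ := s.exists_max_image (fun u' => w (u', v) - y u') ⟨u₀, hu₀s⟩
        have hsE : ∀ u' ∈ s, (u', v) ∈ E := by
          intro u' hu'
          obtain ⟨e, he, h1⟩ := Finset.mem_image.1 hu'
          obtain ⟨heE, h2⟩ := Finset.mem_filter.1 he
          have : e = (u', v) := by
            ext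
            · exact h1
            · exact h2
          rwa [this] at heE
        have huE : (u, v) ∈ E := hsE u hus
        set m := w (u, v) - y u with hm
        have hmu₀ : w (u₀, v) - y u₀ ≤ m := hmax u₀ hu₀s
        have hw₀ : 0 < w (u₀, v) := hw _ hu₀E
        have hwmin₀ : wmin ≤ w (u₀, v) := Finset.inf'_le _ hu₀E
        have hmpos : 0 < m := lt_of_lt_of_le (lt_trans (mul_pos hε0 hw₀) hu₀) hmu₀
        have hδm : δ ≤ ε * m := by
          have : ε * wmin ≤ m := by nlinarith
          calc δ = ε * (ε * wmin) := rfl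
            _ ≤ ε * m := by nlinarith
        set y' := Function.update y u (y u + ε * m) with hy'
        set M' := insert (u, v) (M.filter (fun e => e.1 ≠ u ∧ e.2 ≠ v)) with hM'
        have hy'u : y' u = y u + ε * m := by simp [hy']
        have hy'ne : ∀ u₁, u₁ ≠ u → y' u₁ = y u₁ := by
          intro u₁ h
          simp [hy', Function.update_apply, h]
        have hy'ge : ∀ u₁, y u₁ ≤ y' u₁ := by
          intro u₁
          rcases eq_or_ne u₁ u with rfl | h
          · rw [hy'u]; nlinarith
          · rw [hy'ne u₁ h]
        -- Invariants for the new state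
        have hME' : M' ⊆ E :=
          Finset.insert_subset huE ((Finset.filter_subset _ _).trans hME)
        have hmatch' : IsMatching M' := by
          intro e he e' he' hnee
          rcases Finset.mem_insert.1 he with rfl | hef
          · rcases Finset.mem_insert.1 he' with rfl | hef'
            · exact absurd rfl hnee
            · obtain ⟨_, h1, h2⟩ := Finset.mem_filter.1 hef'
              exact ⟨Ne.symm h1, Ne.symm h2⟩
          · rcases Finset.mem_insert.1 he' with rfl | hef'
            · obtain ⟨_, h1, h2⟩ := Finset.mem_filter.1 hef
              exact ⟨h1, h2⟩
            · exact hmatch e (Finset.mem_filter.1 hef).1 e' (Finset.mem_filter.1 hef').1 hnee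
        have hy0' : ∀ u₁, 0 ≤ y' u₁ := by
          intro u₁
          exact le_trans (hy0 u₁) (hy'ge u₁)
        have hyun' : ∀ u₁, (∀ e ∈ M', e.1 ≠ u₁) → y' u₁ = 0 := by
          intro u₁ h
          have hne1 : u ≠ u₁ := h (u, v) (Finset.mem_insert_self _ _)
          rw [hy'ne u₁ (Ne.symm hne1)]
          apply hyun u₁
          intro e heM he1
          by_cases h2 : e.2 = v
          · exact hv e heM h2
          · have heM' : e ∈ M' := Finset.mem_insert_of_mem
              (Finset.mem_filter.2 ⟨heM, by rw [he1]; exact Ne.symm hne1, h2⟩)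
            exact h e heM' he1
        have hstab' : ∀ e ∈ M', 0 < w e - y' e.1 ∧ ∀ u' : U, (u', e.2) ∈ E →
            (1 - 2 * ε) * (w (u', e.2) - y' u') ≤ w e - y' e.1 := by
          intro e heM'
          rcases Finset.mem_insert.1 heM' with rfl | hef
          · have hL : w (u, v) - y' u = (1 - ε) * m := by rw [hy'u, hm]; ring
            constructor
            · rw [hL]; nlinarith
            · intro u' hu'E
              have hu's : u' ∈ s :=
                Finset.mem_image.2 ⟨(u', v), Finset.mem_filter.2 ⟨hu'E, rfl⟩, rfl⟩
              have h1 : w (u', v) - y u' ≤ m := hmax u' hu's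
              have h2 : w (u', v) - y' u' ≤ m := by
                have := hy'ge u'; linarith
              rw [hL]
              calc (1 - 2 * ε) * (w (u', v) - y' u') ≤ (1 - 2 * ε) * m :=
                    mul_le_mul_of_nonneg_left h2 h2ε
                _ ≤ (1 - ε) * m := by nlinarith
          · obtain ⟨heM, he1, _⟩ := Finset.mem_filter.1 hef
            have hLi : y' e.1 = y e.1 := hy'ne e.1 he1
            obtain ⟨hpos, hst⟩ := hstab e heM
            refine ⟨by rw [hLi]; exact hpos, ?_⟩
            intro u' hu'
            rw [hLi]
            have h3 := hst u' hu'
            have h4 : (1 - 2 * ε) * (w (u', e.2) - y' u') ≤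
                (1 - 2 * ε) * (w (u', e.2) - y u') :=
              mul_le_mul_of_nonneg_left (by have := hy'ge u'; linarith) h2ε
            linarith
        have hyW' : ∀ u₁, y' u₁ ≤ W := by
          intro u₁
          rcases eq_or_ne u₁ u with rfl | h
          · rw [hy'u]
            have h1 : w (u₁, v) ≤ W := Finset.le_sup' w huE
            have h2 : y u₁ ≤ W := hyW u₁
            rw [hm]
            nlinarith
          · rw [hy'ne u₁ h]; exact hyW u₁
        have hsum' : ∑ u₁, y' u₁ = (∑ u₁, y u₁) + ε * m := by
          rw [hy', Finset.sum_update_of_mem (Finset.mem_univ u)]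
          have := Finset.add_sum_erase Finset.univ y (Finset.mem_univ u)
          rw [Finset.sdiff_singleton_eq_erase, ← this]
          ring
        have hsum'' : B - ∑ u₁, y' u₁ ≤ n * δ := by
          rw [hsum']
          push_cast at hsum ⊢
          linarith
        exact ih M' y' hME' hmatch' hy0' hyun' hstab' hyW' hsum''
  -- Start the process from the empty matching and zero prices.
  obtain ⟨n, hn⟩ := exists_nat_ge (B / δ)
  have hBn : B ≤ n * δ := by
    rw [div_le_iff₀ hδ] at hn
    exact hn
  have h0 : B - ∑ _u : U, (0:ℝ) ≤ n * δ := by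
    simpa using hBn
  exact key n ∅ (fun _ => 0) (Finset.empty_subset E)
    (fun e he => absurd he (Finset.notMem_empty e))
    (fun _ => le_refl 0) (fun _ _ => rfl)
    (fun e he => absurd he (Finset.notMem_empty e))
    (fun _ => hW0.le) h0

/-- **Existence of an ε-stable matching–price pair** (correctness content of the
multiplicative auction algorithm), together with the consequence that for every
`0 < ε' < 1` there is a `(1-ε')`-approximate maximum weight matching. -/
theorem exists_eps_stable_pair
    {U V : Type*} [Fintype U] [Fintype V] [DecidableEq U] [DecidableEq V]
    (E : Finset (U × V)) (w : U × V → ℝ)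
    (hw : ∀ e ∈ E, 0 < w e)
    (ε : ℝ) (hε0 : 0 < ε) (hε : ε ≤ 1 / 2) :
    (∃ (M : Finset (U × V)) (y : U → ℝ),
      M ⊆ E ∧ IsMatching M ∧ (∀ u : U, 0 ≤ y u) ∧
      (∀ u : U, (∀ e ∈ M, e.1 ≠ u) → y u = 0) ∧
      (∀ e ∈ M, 0 < w e - y e.1 ∧
        ∀ u' : U, (u', e.2) ∈ E → (1 - 2 * ε) * (w (u', e.2) - y u') ≤ w e - y e.1) ∧
      (∀ v : V, (∀ e ∈ M, e.2 ≠ v) →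
        ∀ u : U, (u, v) ∈ E → w (u, v) - y u ≤ ε * w (u, v))) ∧
    (∀ ε' : ℝ, 0 < ε' → ε' < 1 →
      ∃ M : Finset (U × V), M ⊆ E ∧ IsMatching M ∧
        ∀ M' : Finset (U × V), M' ⊆ E → IsMatching M' →
          (1 - ε') * ∑ e ∈ M', w e ≤ ∑ e ∈ M, w e) := by
  classical
  constructor
  · exact auction_aux E w hw ε hε0 hε
  · intro ε' hε'0 _
    set S := E.powerset.filter (fun M => IsMatching M) with hS
    have hSne : S.Nonempty := by
      refine ⟨∅, Finset.mem_filter.2 ⟨Finset.empty_mem_powerset E, ?_⟩⟩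
      intro e he
      exact absurd he (Finset.notMem_empty e)
    obtain ⟨M, hMS, hmax⟩ := S.exists_max_image (fun M => ∑ e ∈ M, w e) hSne
    obtain ⟨hMP, hMmatch⟩ := Finset.mem_filter.1 hMS
    refine ⟨M, Finset.mem_powerset.1 hMP, hMmatch, ?_⟩
    intro M' hM'E hM'match
    have h1 : ∑ e ∈ M', w e ≤ ∑ e ∈ M, w e :=
      hmax M' (Finset.mem_filter.2 ⟨Finset.mem_powerset.2 hM'E, hM'match⟩)
    have h2 : 0 ≤ ∑ e ∈ M', w e :=
      Finset.sum_nonneg (fun e he => (hw e (hM'E he)).le)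
    nlinarith
end

section
/- Alternating path inequality (Lemma A.1): Let 0 ≤ ε ≤ 1/2, let k ≥ 1, let a_1, …, a_k and b_1, …, b_k be real numbers (a_i = w(u_i v_i) are the weights of the M'-edges of an alternating path, b_i = w(u_{i+1} v_i) the weights of its M-edges), and let y_1, …, y_{k+1} be nonnegative reals (the prices y_{u_1}, …, y_{u_{k+1}}). If for every i with 1 ≤ i ≤ k we have (1−2ε)·(a_i − y_i) ≤ b_i − y_{i+1}, then (1−2ε)·Σ_{i=1}^k a_i ≤ Σ_{i=1}^k b_i + (1−2ε)·y_1 − y_{k+1}. -/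
/-- **Alternating path inequality** (Lemma A.1, arithmetic form).
Along an alternating path with `M'`-edge weights `a i`, `M`-edge weights `b i`, and
nonnegative prices `y 1, …, y (k+1)`, if `(1-2ε)·(a i - y i) ≤ b i - y (i+1)` for
`1 ≤ i ≤ k`, then `(1-2ε)·Σ a ≤ Σ b + (1-2ε)·y 1 - y (k+1)`. -/
theorem alternating_path_inequality
    (ε : ℝ) (hε0 : 0 ≤ ε) (hε : ε ≤ 1 / 2)
    (k : ℕ) (hk : 1 ≤ k)
    (a b y : ℕ → ℝ)
    (hy : ∀ i, 1 ≤ i → i ≤ k + 1 → 0 ≤ y i)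
    (h : ∀ i, 1 ≤ i → i ≤ k → (1 - 2 * ε) * (a i - y i) ≤ b i - y (i + 1)) :
    (1 - 2 * ε) * ∑ i ∈ Finset.Icc 1 k, a i ≤
      (∑ i ∈ Finset.Icc 1 k, b i) + (1 - 2 * ε) * y 1 - y (k + 1) := by
  induction k with
  | zero => omega
  | succ n ih =>
    rcases Nat.eq_or_lt_of_le hk with h1 | h1
    · -- n = 0, k = 1
      have hn : n = 0 := by omega
      subst hn
      simp only [Finset.Icc_self, Finset.sum_singleton]
      have := h 1 le_rfl le_rfl
      linarith
    · -- n ≥ 1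
      have hn : 1 ≤ n := by omega
      have hsum : ∀ f : ℕ → ℝ, ∑ i ∈ Finset.Icc 1 (n + 1), f i
          = (∑ i ∈ Finset.Icc 1 n, f i) + f (n + 1) := by
        intro f
        rw [← Finset.Ico_add_one_right_eq_Icc, Finset.sum_Ico_succ_top (by omega), Finset.Ico_add_one_right_eq_Icc]
      rw [hsum a, hsum b]
      have hih := ih hn (fun i h1 h2 => hy i h1 (by omega))
        (fun i h1 h2 => h i h1 (by omega))
      have hlast := h (n + 1) (by omega) le_rfl
      have hy1 := hy (n + 1) (by omega) (by omega)
      nlinarith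
end

section
/- Odd alternating path inequality (case 2b of the combinatorial proof): Let 0 ≤ ε ≤ 1/2, let k ≥ 1, let a_1, …, a_{k+1} and b_1, …, b_k be real numbers, and let y_1, …, y_{k+1} be nonnegative reals with y_1 = 0 and y_{k+1} ≥ (1−ε)·a_{k+1}. If for every i with 1 ≤ i ≤ k we have (1−2ε)·(a_i − y_i) ≤ b_i − y_{i+1}, then (1−2ε)·Σ_{i=1}^{k+1} a_i ≤ Σ_{i=1}^k b_i. -/
lemma odd_alt_aux
    (ε : ℝ) (hε0 : 0 ≤ ε)
    (a b y : ℕ → ℝ) (hy1 : y 1 = 0) :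
    ∀ k, 1 ≤ k →
    (∀ i, 1 ≤ i → i ≤ k + 1 → 0 ≤ y i) →
    (∀ i, 1 ≤ i → i ≤ k → (1 - 2 * ε) * (a i - y i) ≤ b i - y (i + 1)) →
    (1 - 2 * ε) * ∑ i ∈ Finset.Icc 1 k, a i ≤
      (∑ i ∈ Finset.Icc 1 k, b i) - y (k + 1) := by
  intro k hk
  induction k, hk using Nat.le_induction with
  | base =>
    intro hy h
    have h1 := h 1 le_rfl le_rfl
    simp [hy1] at h1 ⊢
    linarith
  | succ k hk ih =>
    intro hy h
    have ihk := ih (fun i h1 h2 => hy i h1 (le_trans h2 (by omega)))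
      (fun i h1 h2 => h i h1 (by omega))
    have hk1 := h (k + 1) (by omega) le_rfl
    have hyk1 : 0 ≤ y (k + 1) := hy (k + 1) (by omega) (by omega)
    rw [Finset.sum_Icc_succ_top (by omega : 1 ≤ k + 1),
        Finset.sum_Icc_succ_top (by omega : 1 ≤ k + 1)]
    nlinarith [mul_nonneg hε0 hyk1]

/-- **Odd alternating path inequality** (case 2b of the combinatorial proof).
Along an odd alternating path with `M*`-edge weights `a 1, …, a (k+1)`, `M`-edge weights
`b 1, …, b k`, nonnegative prices `y` with `y 1 = 0` and `y (k+1) ≥ (1-ε)·a (k+1)`, if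
`(1-2ε)·(a i - y i) ≤ b i - y (i+1)` for `1 ≤ i ≤ k`, then
`(1-2ε)·Σ_{i=1}^{k+1} a i ≤ Σ_{i=1}^{k} b i`. -/
theorem odd_alternating_path_inequality
    (ε : ℝ) (hε0 : 0 ≤ ε) (hε : ε ≤ 1 / 2)
    (k : ℕ) (hk : 1 ≤ k)
    (a b y : ℕ → ℝ)
    (hy : ∀ i, 1 ≤ i → i ≤ k + 1 → 0 ≤ y i)
    (hy1 : y 1 = 0)
    (hyk : (1 - ε) * a (k + 1) ≤ y (k + 1))
    (h : ∀ i, 1 ≤ i → i ≤ k → (1 - 2 * ε) * (a i - y i) ≤ b i - y (i + 1)) :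
    (1 - 2 * ε) * ∑ i ∈ Finset.Icc 1 (k + 1), a i ≤ ∑ i ∈ Finset.Icc 1 k, b i := by
  have aux := odd_alt_aux ε hε0 a b y hy1 k hk hy h
  rw [Finset.sum_Icc_succ_top (by omega : 1 ≤ k + 1)]
  have hyk1 : 0 ≤ y (k + 1) := hy (k + 1) (by omega) (by omega)
  have hlast : (1 - 2 * ε) * a (k + 1) ≤ y (k + 1) := by
    rcases le_or_gt 0 (a (k + 1)) with ha | ha
    · nlinarith
    · nlinarith
  linarith [mul_add (1 - 2*ε) (∑ i ∈ Finset.Icc 1 k, a i) (a (k+1))]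
end
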